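/- Let k be a perfect field of characteristic p > 0 and W = W(k). A φ-gauge (M, f, v, φ) over W of finite type, concentrated in an interval [a,b], is isomorphic (as a φ-gauge, i.e., via a family of W-module isomorphisms commuting with f, v and φ) to the φ-gauge associated to some virtual crystal over k if and only if the underlying W-gauge (M, f, v) is free. -/

import Mathlib

open Pointwise

universe u v

/-- A gauge over a commutative ring `R` (for the prime `p`). -/
structure GaugeData (R : Type u) [CommRing R] (p : ℕ) : Type (max u (v + 1)) where
  M : ℤ → Type v
  [acg : ∀ r, AddCommGroup (M r)]
  [mod : ∀ r, Module R (M r)]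
  f : ∀ r : ℤ, M r →ₗ[R] M (r + 1)
  v : ∀ r : ℤ, M (r + 1) →ₗ[R] M r
  fv : ∀ (r : ℤ) (x : M (r + 1)), f r (v r x) = (p : R) • x
  vf : ∀ (r : ℤ) (x : M r), v r (f r x) = (p : R) • x

attribute [instance] GaugeData.acg GaugeData.mod

variable {R : Type u} [CommRing R] {p : ℕ}

/-- Transport along an equality of indices. -/
def GaugeData.cast (G : GaugeData R p) {r s : ℤ} (h : r = s) : G.M r ≃ₗ[R] G.M s := by
  subst h; exact LinearEquiv.refl R (G.M r)

/-- Iterated `f` : `M r → M (r + a)`. -/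
def GaugeData.fpow (G : GaugeData R p) : (a : ℕ) → (r : ℤ) → (G.M r →ₗ[R] G.M (r + a))
  | 0, r => (G.cast (by simp)).toLinearMap
  | a + 1, r =>
      (G.cast (show r + 1 + (a : ℕ) = r + ((a + 1 : ℕ) : ℤ) by push_cast; ring)).toLinearMap
        ∘ₗ (G.fpow a (r + 1)) ∘ₗ (G.f r)

/-- Iterated `v` : `M r → M (r - b)`. -/
def GaugeData.vpow (G : GaugeData R p) : (b : ℕ) → (r : ℤ) → (G.M r →ₗ[R] G.M (r - b))
  | 0, r => (G.cast (by simp)).toLinearMap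
  | b + 1, r =>
      (G.cast (show r - 1 - (b : ℕ) = r - ((b + 1 : ℕ) : ℤ) by push_cast; ring)).toLinearMap
        ∘ₗ (G.vpow b (r - 1)) ∘ₗ (G.v (r - 1))
        ∘ₗ (G.cast (show r = r - 1 + 1 by ring)).toLinearMap

/-- The generating set in degree `n` determined by homogeneous elements `m i`. -/
def GaugeData.genSet (G : GaugeData R p) {s : ℕ} (d : Fin s → ℤ) (m : ∀ i, G.M (d i))
    (n : ℤ) : Set (G.M n) :=
  {y | ∃ (i : Fin s) (a : ℕ) (h : d i + a = n), y = G.cast h (G.fpow a (d i) (m i))} ∪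
    {y | ∃ (i : Fin s) (b : ℕ) (h : d i - b = n), y = G.cast h (G.vpow b (d i) (m i))}

/-- The homogeneous elements `m i` generate the gauge `G`. -/
def GaugeData.Generates (G : GaugeData R p) {s : ℕ} (d : Fin s → ℤ)
    (m : ∀ i, G.M (d i)) : Prop :=
  ∀ (n : ℤ) (x : G.M n), x ∈ Submodule.span R (G.genSet d m n)

/-- A gauge is of finite type if finitely many homogeneous elements generate it. -/
def GaugeData.IsFiniteType (G : GaugeData R p) : Prop :=
  ∃ (s : ℕ) (d : Fin s → ℤ) (m : ∀ i, G.M (d i)), G.Generates d m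

/-- A gauge is concentrated in the interval `[a, b]`. -/
def GaugeData.ConcentratedIn (G : GaugeData R p) (a b : ℤ) : Prop :=
  (∀ r : ℤ, r + 1 ≤ a → Function.Bijective (G.v r)) ∧
    (∀ r : ℤ, b ≤ r → Function.Bijective (G.f r))

section Crystal

variable (p) [hp : Fact p.Prime] (k : Type) [Field k] [CharP k p] [PerfectRing k p]

variable (D : Type) [AddCommGroup D] [Module (FractionRing (WittVector p k)) D]
  [Module (WittVector p k) D] [IsScalarTower (WittVector p k) (FractionRing (WittVector p k)) D]
  (ϕ : D → D) (M : Submodule (WittVector p k) D)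

/-- The degree-`r` component `M^r = {m ∈ M : ϕ(m) ∈ pʳ·M}` of the gauge associated to a
virtual crystal `(D, ϕ, M)`. -/
def crystalComponentSet (r : ℤ) : Set D :=
  {x | x ∈ M ∧ ϕ x ∈ (p : FractionRing (WittVector p k)) ^ r • (M : Set D)}

/-- `M^r` as a `W(k)`-submodule of `D` (given that `ϕ` is additive and `σ`-semilinear,
where `σB` is induced by the Witt-vector Frobenius). -/
def crystalComponent
    (σB : FractionRing (WittVector p k) ≃+* FractionRing (WittVector p k))
    (hσB : ∀ w : WittVector p k,
      σB (algebraMap (WittVector p k) (FractionRing (WittVector p k)) w) =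
        algebraMap (WittVector p k) (FractionRing (WittVector p k))
          (WittVector.frobeniusEquiv p k w))
    (hadd : ∀ x y : D, ϕ (x + y) = ϕ x + ϕ y)
    (hsemi : ∀ (c : FractionRing (WittVector p k)) (x : D), ϕ (c • x) = σB c • ϕ x)
    (r : ℤ) : Submodule (WittVector p k) D where
  carrier := crystalComponentSet p k D ϕ M r
  add_mem' := by
    rintro x y ⟨hxM, hx⟩ ⟨hyM, hy⟩
    obtain ⟨m1, hm1, hx⟩ := Set.mem_smul_set.mp hx
    obtain ⟨m2, hm2, hy⟩ := Set.mem_smul_set.mp hy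
    exact ⟨M.add_mem hxM hyM, Set.mem_smul_set.mpr
      ⟨m1 + m2, M.add_mem hm1 hm2, by rw [smul_add, hx, hy, hadd]⟩⟩
  zero_mem' := by
    have h0 : ϕ 0 = 0 := by
      have h := hadd 0 0
      rw [add_zero] at h
      first | exact (left_eq_add.mp h) | simpa using h
    exact ⟨M.zero_mem, Set.mem_smul_set.mpr ⟨0, M.zero_mem, by rw [smul_zero, h0]⟩⟩
  smul_mem' := by
    rintro c x ⟨hxM, hx⟩
    obtain ⟨m1, hm1, hx⟩ := Set.mem_smul_set.mp hx
    refine ⟨M.smul_mem c hxM, Set.mem_smul_set.mpr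
      ⟨(WittVector.frobeniusEquiv p k c) • m1, M.smul_mem _ hm1, ?_⟩⟩
    have h1 : c • x = (algebraMap (WittVector p k) (FractionRing (WittVector p k)) c) • x :=
      (algebraMap_smul (FractionRing (WittVector p k)) c x).symm
    have h2 : ϕ (c • x) = (p : FractionRing (WittVector p k)) ^ r •
        ((WittVector.frobeniusEquiv p k c) • m1) := by
      rw [h1, hsemi, hσB, ← hx, smul_comm, algebraMap_smul]
    exact h2.symm

/-- The gauge associated to a virtual crystal `(D, ϕ, M)`: the components are the
`M^r = {m ∈ M : ϕ(m) ∈ pʳ·M}`, `f` is multiplication by `p` and `v` is the inclusion. -/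
noncomputable def crystalGauge
    (σB : FractionRing (WittVector p k) ≃+* FractionRing (WittVector p k))
    (hσB : ∀ w : WittVector p k,
      σB (algebraMap (WittVector p k) (FractionRing (WittVector p k)) w) =
        algebraMap (WittVector p k) (FractionRing (WittVector p k))
          (WittVector.frobeniusEquiv p k w))
    (hadd : ∀ x y : D, ϕ (x + y) = ϕ x + ϕ y)
    (hsemi : ∀ (c : FractionRing (WittVector p k)) (x : D), ϕ (c • x) = σB c • ϕ x) :
    GaugeData (WittVector p k) p where
  M r := ↥(crystalComponent p k D ϕ M σB hσB hadd hsemi r)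
  f r := LinearMap.codRestrict (crystalComponent p k D ϕ M σB hσB hadd hsemi (r + 1))
    ((p : WittVector p k) • (crystalComponent p k D ϕ M σB hσB hadd hsemi r).subtype)
    (by
      rintro ⟨x, hxM, hx⟩
      obtain ⟨m1, hm1, hx⟩ := Set.mem_smul_set.mp hx
      simp only [LinearMap.smul_apply, Submodule.subtype_apply]
      have h1 : (p : WittVector p k) • x = ((p : FractionRing (WittVector p k)) • x : D) := by
        rw [← algebraMap_smul (FractionRing (WittVector p k))
          ((p : ℕ) : WittVector p k) x, map_natCast]
      refine ⟨M.smul_mem _ hxM, Set.mem_smul_set.mpr ⟨m1, hm1, ?_⟩⟩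
      rw [h1, hsemi, map_natCast, ← hx, smul_smul]
      congr 1
      rw [zpow_add_one₀ (WittVector.FractionRing.p_nonzero p k), mul_comm])
  v r := LinearMap.codRestrict (crystalComponent p k D ϕ M σB hσB hadd hsemi r)
    ((crystalComponent p k D ϕ M σB hσB hadd hsemi (r + 1)).subtype)
    (by
      rintro ⟨x, hxM, hx⟩
      obtain ⟨m1, hm1, hx⟩ := Set.mem_smul_set.mp hx
      simp only [Submodule.subtype_apply]
      refine ⟨hxM, Set.mem_smul_set.mpr ⟨(p : WittVector p k) • m1, M.smul_mem _ hm1, ?_⟩⟩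
      have h1 : (p : WittVector p k) • m1 = ((p : FractionRing (WittVector p k)) • m1 : D) := by
        rw [← algebraMap_smul (FractionRing (WittVector p k))
          ((p : ℕ) : WittVector p k) m1, map_natCast]
      rw [h1, ← hx, smul_smul]
      congr 1
      rw [zpow_add_one₀ (WittVector.FractionRing.p_nonzero p k)])
  fv := by
    intro r x
    apply Subtype.ext
    simp
  vf := by
    intro r x
    apply Subtype.ext
    simp

end Crystal

/-- The direct sum of a finite family of gauges. -/
def gaugeDirectSum {ι : Type} [Fintype ι] (G : ι → GaugeData R p) : GaugeData R p where
  M r := ∀ i, (G i).M r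
  f r := LinearMap.pi fun i => (G i).f r ∘ₗ LinearMap.proj i
  v r := LinearMap.pi fun i => (G i).v r ∘ₗ LinearMap.proj i
  fv := by
    intro r x
    funext i
    simpa using (G i).fv r (x i)
  vf := by
    intro r x
    funext i
    simpa using (G i).vf r (x i)

/-- An isomorphism of gauges: a family of linear equivalences commuting with `f` and `v`. -/
def GaugeData.IsoTo (G G' : GaugeData R p) : Prop :=
  ∃ e : ∀ r : ℤ, G.M r ≃ₗ[R] G'.M r,
    (∀ (r : ℤ) (x : G.M r), e (r + 1) (G.f r x) = G'.f r (e r x)) ∧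
      (∀ (r : ℤ) (x : G.M (r + 1)), e r (G.v r x) = G'.v r (e (r + 1) x))

/-- The standard free gauge of degree `d` over the Witt vectors `W`: all components are `W`,
`f` is the identity in degrees `≥ d` and multiplication by `p` below, and `v : M^{r+1} → M^r`
is multiplication by `p` for `r ≥ d` and the identity for `r < d`. -/
noncomputable def stdFreeGaugeWitt (p : ℕ) [hp : Fact p.Prime] (k : Type) [Field k] [CharP k p]
    (d : ℤ) : GaugeData (WittVector p k) p where
  M _ := WittVector p k
  f r := if d ≤ r then LinearMap.id else (p : WittVector p k) • LinearMap.id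
  v r := if r + 1 ≤ d then LinearMap.id else (p : WittVector p k) • LinearMap.id
  fv := by
    intro r x
    try dsimp only
    split_ifs
    · exfalso; omega
    · simp
    · simp
    · exfalso; omega
  vf := by
    intro r x
    try dsimp only
    split_ifs
    · exfalso; omega
    · simp
    · simp
    · exfalso; omega

/-- A gauge over `W = W(k)` is free if it is isomorphic to a finite direct sum of standard
free gauges. -/
def GaugeData.IsFreeWitt {p : ℕ} [hp : Fact p.Prime] {k : Type} [Field k] [CharP k p]
    (G : GaugeData (WittVector p k) p) : Prop :=
  ∃ (n : ℕ) (d : Fin n → ℤ), G.IsoTo (gaugeDirectSum fun i => stdFreeGaugeWitt p k (d i))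

/-- A virtual crystal over a perfect field `k`; `σB` denotes the automorphism of the
fraction field `B` of `W(k)` induced by the Witt-vector Frobenius. -/
structure VirtualCrystal (p : ℕ) [Fact p.Prime] (k : Type) [Field k] [CharP k p]
    [PerfectRing k p]
    (σB : FractionRing (WittVector p k) ≃+* FractionRing (WittVector p k)) where
  D : Type
  [acg : AddCommGroup D]
  [modB : Module (FractionRing (WittVector p k)) D]
  [modW : Module (WittVector p k) D]
  [tower : IsScalarTower (WittVector p k) (FractionRing (WittVector p k)) D]
  [finB : Module.Finite (FractionRing (WittVector p k)) D]
  phi : D → D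
  phi_add : ∀ x y, phi (x + y) = phi x + phi y
  phi_bij : Function.Bijective phi
  phi_semi : ∀ (c : FractionRing (WittVector p k)) (x : D), phi (c • x) = σB c • phi x
  L : Submodule (WittVector p k) D
  L_fg : L.FG
  L_span : Submodule.span (FractionRing (WittVector p k)) (L : Set D) = ⊤

attribute [instance] VirtualCrystal.acg VirtualCrystal.modB VirtualCrystal.modW
  VirtualCrystal.tower VirtualCrystal.finB


set_option linter.unusedSectionVars false
set_option linter.unusedVariables false
set_option maxHeartbeats 1000000

section Aux

variable (p : ℕ) [hp : Fact p.Prime] (k : Type) [Field k] [CharP k p] [PerfectRing k p]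

theorem aux_windep_bindep {D : Type} [AddCommGroup D]
    [Module (FractionRing (WittVector p k)) D] [Module (WittVector p k) D]
    [IsScalarTower (WittVector p k) (FractionRing (WittVector p k)) D]
    {ι : Type} [Fintype ι] (h : ι → D)
    (hind : ∀ w : ι → WittVector p k, ∑ i, w i • h i = 0 → w = 0)
    (c : ι → FractionRing (WittVector p k)) (hc : ∑ i, c i • h i = 0) : c = 0 := by
  obtain ⟨s, hs⟩ := IsLocalization.exist_integer_multiples_of_finite
    (nonZeroDivisors (WittVector p k)) c
  choose w hw using hs
  have hsum : ∑ i, w i • h i = 0 := by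
    have h1 : ∀ i, w i • h i = (s : WittVector p k) • (c i • h i) := by
      intro i
      rw [← smul_assoc, ← hw i, algebraMap_smul]
    simp_rw [h1, ← Finset.smul_sum, hc, smul_zero]
  have hw0 := hind w hsum
  funext i
  have h2 : (algebraMap (WittVector p k) (FractionRing (WittVector p k))) (w i) =
      (algebraMap (WittVector p k) (FractionRing (WittVector p k)) (s : WittVector p k)) * c i := by
    rw [hw i, Algebra.smul_def]
  rw [hw0] at h2
  simp only [Pi.zero_apply, map_zero] at h2
  have hs0 : (algebraMap (WittVector p k) (FractionRing (WittVector p k))) (s : WittVector p k) ≠ 0 :=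
    IsFractionRing.to_map_ne_zero_of_mem_nonZeroDivisors s.2
  rcases mul_eq_zero.mp h2.symm with h3 | h3
  · exact absurd h3 hs0
  · exact h3

theorem aux_smul_comm {D : Type} [AddCommGroup D]
    [Module (FractionRing (WittVector p k)) D] [Module (WittVector p k) D]
    [IsScalarTower (WittVector p k) (FractionRing (WittVector p k)) D]
    (w : WittVector p k) (c : FractionRing (WittVector p k)) (x : D) :
    w • (c • x) = c • (w • x) := by
  rw [← algebraMap_smul (FractionRing (WittVector p k)) w x,
    ← algebraMap_smul (FractionRing (WittVector p k)) w (c • x), smul_smul, smul_smul, mul_comm]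

theorem aux_phi_sum {D : Type} [AddCommGroup D]
    [Module (FractionRing (WittVector p k)) D] [Module (WittVector p k) D]
    [IsScalarTower (WittVector p k) (FractionRing (WittVector p k)) D] (ϕ : D → D)
    (σB : FractionRing (WittVector p k) ≃+* FractionRing (WittVector p k))
    (hadd : ∀ x y : D, ϕ (x + y) = ϕ x + ϕ y)
    (hsemi : ∀ (c : FractionRing (WittVector p k)) (x : D), ϕ (c • x) = σB c • ϕ x)
    {n : ℕ} (g : Fin n → D) (c : Fin n → FractionRing (WittVector p k)) :
    ϕ (∑ i, c i • g i) = ∑ i, σB (c i) • ϕ (g i) := by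
  have := map_sum (AddMonoidHom.mk' ϕ hadd) (fun i => c i • g i) Finset.univ
  simp only [AddMonoidHom.mk'_apply] at this
  rw [this]
  exact Finset.sum_congr rfl fun i _ => hsemi (c i) (g i)

theorem aux_phi_sum_w {D : Type} [AddCommGroup D]
    [Module (FractionRing (WittVector p k)) D] [Module (WittVector p k) D]
    [IsScalarTower (WittVector p k) (FractionRing (WittVector p k)) D] (ϕ : D → D)
    (σB : FractionRing (WittVector p k) ≃+* FractionRing (WittVector p k))
    (hσB : ∀ w : WittVector p k,
      σB (algebraMap (WittVector p k) (FractionRing (WittVector p k)) w) =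
        algebraMap (WittVector p k) (FractionRing (WittVector p k))
          (WittVector.frobeniusEquiv p k w))
    (hadd : ∀ x y : D, ϕ (x + y) = ϕ x + ϕ y)
    (hsemi : ∀ (c : FractionRing (WittVector p k)) (x : D), ϕ (c • x) = σB c • ϕ x)
    {n : ℕ} (g : Fin n → D) (w : Fin n → WittVector p k) :
    ϕ (∑ i, w i • g i) = ∑ i, (algebraMap (WittVector p k) (FractionRing (WittVector p k))
      (WittVector.frobeniusEquiv p k (w i))) • ϕ (g i) := by
  have h1 : ∀ i, (w i) • g i =
      (algebraMap (WittVector p k) (FractionRing (WittVector p k)) (w i)) • g i := fun i =>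
    (algebraMap_smul (FractionRing (WittVector p k)) (w i) (g i)).symm
  simp_rw [h1]
  rw [aux_phi_sum p k ϕ σB hadd hsemi]
  refine Finset.sum_congr rfl fun i _ => ?_
  rw [hσB]

end Aux

section CoreLemma

variable (p : ℕ) [hp : Fact p.Prime] (k : Type) [Field k] [CharP k p] [PerfectRing k p]

variable (D : Type) [AddCommGroup D] [Module (FractionRing (WittVector p k)) D]
  [Module (WittVector p k) D] [IsScalarTower (WittVector p k) (FractionRing (WittVector p k)) D]
  {n : ℕ} (d : Fin n → ℤ) (g : Fin n → D)

/-- The underlying linear map of the component isomorphism. -/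
noncomputable def ELin (r : ℤ) : (Fin n → WittVector p k) →ₗ[WittVector p k] D where
  toFun x := ∑ i, ((p : WittVector p k) ^ ((r - d i).toNat) * x i) • g i
  map_add' x y := by
    simp_rw [Pi.add_apply, mul_add, add_smul, Finset.sum_add_distrib]
  map_smul' c x := by
    simp only [Pi.smul_apply, smul_eq_mul, RingHom.id_apply]
    rw [Finset.smul_sum]
    refine Finset.sum_congr rfl fun i _ => ?_
    rw [smul_smul]
    congr 1
    ring

theorem ELin_apply (r : ℤ) (x : Fin n → WittVector p k) :
    ELin p k D d g r x = ∑ i, ((p : WittVector p k) ^ ((r - d i).toNat) * x i) • g i := rfl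

theorem core_lemma
    (σB : FractionRing (WittVector p k) ≃+* FractionRing (WittVector p k))
    (hσB : ∀ w : WittVector p k,
      σB (algebraMap (WittVector p k) (FractionRing (WittVector p k)) w) =
        algebraMap (WittVector p k) (FractionRing (WittVector p k))
          (WittVector.frobeniusEquiv p k w))
    (ϕ : D → D) (L : Submodule (WittVector p k) D)
    (hadd : ∀ x y : D, ϕ (x + y) = ϕ x + ϕ y)
    (hsemi : ∀ (c : FractionRing (WittVector p k)) (x : D), ϕ (c • x) = σB c • ϕ x)
    (hinj : Function.Injective ϕ)
    (h : Fin n → D)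
    (hgL : ∀ i, g i ∈ L) (hhL : ∀ i, h i ∈ L)
    (hgspan : ∀ x ∈ L, ∃ w : Fin n → WittVector p k, x = ∑ i, w i • g i)
    (hhspan : ∀ x ∈ L, ∃ w : Fin n → WittVector p k, x = ∑ i, w i • h i)
    (hindg : ∀ c : Fin n → FractionRing (WittVector p k), ∑ i, c i • g i = 0 → c = 0)
    (hindh : ∀ c : Fin n → FractionRing (WittVector p k), ∑ i, c i • h i = 0 → c = 0)
    (hϕg : ∀ i, ϕ (g i) = ((p : FractionRing (WittVector p k)) ^ (d i)) • h i) :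
    ∃ E : ∀ r : ℤ, (Fin n → WittVector p k) ≃ₗ[WittVector p k]
        ↥(crystalComponent p k D ϕ L σB hσB hadd hsemi r),
      (∀ (r : ℤ) (x : Fin n → WittVector p k),
          (E r x : D) = ∑ i, ((p : WittVector p k) ^ ((r - d i).toNat) * x i) • g i) ∧
      (∀ (r : ℤ) (x : Fin n → WittVector p k),
          (E (r+1) (fun i => if d i ≤ r then x i else (p : WittVector p k) * x i) : D)
            = (p : WittVector p k) • (E r x : D)) ∧
      (∀ (r : ℤ) (x : Fin n → WittVector p k),
          (E r (fun i => if r + 1 ≤ d i then x i else (p : WittVector p k) * x i) : D)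
            = (E (r+1) x : D)) := by
  have hpB : (p : FractionRing (WittVector p k)) ≠ 0 := WittVector.FractionRing.p_nonzero p k
  have hpW : (p : WittVector p k) ≠ 0 := WittVector.p_nonzero p k
  have hAinj : Function.Injective (algebraMap (WittVector p k) (FractionRing (WittVector p k))) :=
    IsFractionRing.injective (WittVector p k) (FractionRing (WittVector p k))
  have hcoef : ∀ (r : ℤ) (i : Fin n) (y : WittVector p k),
      (p : FractionRing (WittVector p k)) ^ (d i) *
          algebraMap (WittVector p k) (FractionRing (WittVector p k))
            ((p : WittVector p k) ^ ((r - d i).toNat) * y)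
        = (p : FractionRing (WittVector p k)) ^ r *
          algebraMap (WittVector p k) (FractionRing (WittVector p k))
            ((p : WittVector p k) ^ ((d i - r).toNat) * y) := by
    intro r i y
    simp only [map_mul, map_pow, map_natCast]
    rw [← mul_assoc, ← mul_assoc]
    congr 1
    rw [← zpow_natCast (p : FractionRing (WittVector p k)) ((r - d i).toNat),
      ← zpow_natCast (p : FractionRing (WittVector p k)) ((d i - r).toNat),
      ← zpow_add₀ hpB, ← zpow_add₀ hpB]
    congr 1
    omega
  have hphiE : ∀ (r : ℤ) (x : Fin n → WittVector p k),
      ϕ (ELin p k D d g r x)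
        = ∑ i, ((p : FractionRing (WittVector p k)) ^ r *
            algebraMap (WittVector p k) (FractionRing (WittVector p k))
              ((p : WittVector p k) ^ ((d i - r).toNat)
                * WittVector.frobeniusEquiv p k (x i))) • h i := by
    intro r x
    rw [ELin_apply, aux_phi_sum_w p k ϕ σB hσB hadd hsemi]
    refine Finset.sum_congr rfl fun i _ => ?_
    rw [hϕg i, smul_smul]
    congr 1
    have hfr : (WittVector.frobeniusEquiv p k) ((p : WittVector p k) ^ ((r - d i).toNat) * x i)
        = (p : WittVector p k) ^ ((r - d i).toNat) * (WittVector.frobeniusEquiv p k (x i)) := by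
      rw [map_mul, map_pow, map_natCast]
    rw [hfr, mul_comm, hcoef r i]
  have hmem : ∀ (r : ℤ) (x : Fin n → WittVector p k),
      ELin p k D d g r x ∈ crystalComponent p k D ϕ L σB hσB hadd hsemi r := by
    intro r x
    constructor
    · rw [ELin_apply]
      exact Submodule.sum_mem _ fun i _ => L.smul_mem _ (hgL i)
    · rw [hphiE]
      refine Set.mem_smul_set.mpr
        ⟨∑ i, ((p : WittVector p k) ^ ((d i - r).toNat) *
            WittVector.frobeniusEquiv p k (x i)) • h i,
          Submodule.sum_mem _ fun i _ => L.smul_mem _ (hhL i), ?_⟩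
      rw [Finset.smul_sum]
      refine Finset.sum_congr rfl fun i _ => ?_
      rw [← algebraMap_smul (FractionRing (WittVector p k))
        ((p : WittVector p k) ^ ((d i - r).toNat) * WittVector.frobeniusEquiv p k (x i)) (h i),
        smul_smul]
  -- kernel is trivial
  have hker : ∀ (r : ℤ) (x : Fin n → WittVector p k), ELin p k D d g r x = 0 → x = 0 := by
    intro r x hx
    rw [ELin_apply] at hx
    have hx' : ∑ i, (algebraMap (WittVector p k) (FractionRing (WittVector p k))
        ((p : WittVector p k) ^ ((r - d i).toNat) * x i)) • g i = 0 := by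
      simp_rw [algebraMap_smul]
      exact hx
    have h0 := hindg _ hx'
    funext i
    have hi := congrFun h0 i
    simp only [Pi.zero_apply] at hi
    have h1 : (p : WittVector p k) ^ ((r - d i).toNat) * x i = 0 := by
      apply hAinj
      rw [hi, map_zero]
    rcases mul_eq_zero.mp h1 with h2 | h2
    · exact absurd h2 (pow_ne_zero _ hpW)
    · exact h2
  -- surjectivity
  have hsurj : ∀ (r : ℤ) (y : D), y ∈ crystalComponent p k D ϕ L σB hσB hadd hsemi r →
      ∃ x, ELin p k D d g r x = y := by
    intro r y hy
    obtain ⟨hyL, hyϕ⟩ := hy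
    obtain ⟨w, hw⟩ := hgspan y hyL
    obtain ⟨z, hzL, hz⟩ := Set.mem_smul_set.mp hyϕ
    obtain ⟨u, hu⟩ := hhspan z hzL
    have e1 : ϕ y = ∑ i, ((p : FractionRing (WittVector p k)) ^ (d i) *
        algebraMap (WittVector p k) (FractionRing (WittVector p k))
          (WittVector.frobeniusEquiv p k (w i))) • h i := by
      rw [hw, aux_phi_sum_w p k ϕ σB hσB hadd hsemi]
      refine Finset.sum_congr rfl fun i _ => ?_
      rw [hϕg i, smul_smul, mul_comm]
    have e2 : ϕ y = ∑ i, ((p : FractionRing (WittVector p k)) ^ r *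
        algebraMap (WittVector p k) (FractionRing (WittVector p k)) (u i)) • h i := by
      rw [← hz, hu, Finset.smul_sum]
      refine Finset.sum_congr rfl fun i _ => ?_
      rw [← algebraMap_smul (FractionRing (WittVector p k)) (u i) (h i), smul_smul]
    have e3 : ∀ i, (p : FractionRing (WittVector p k)) ^ (d i) *
        algebraMap (WittVector p k) (FractionRing (WittVector p k))
          (WittVector.frobeniusEquiv p k (w i)) =
        (p : FractionRing (WittVector p k)) ^ r *
        algebraMap (WittVector p k) (FractionRing (WittVector p k)) (u i) := by
      have h0 : ∑ i, (((p : FractionRing (WittVector p k)) ^ (d i) *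
          algebraMap (WittVector p k) (FractionRing (WittVector p k))
            (WittVector.frobeniusEquiv p k (w i))) -
          ((p : FractionRing (WittVector p k)) ^ r *
          algebraMap (WittVector p k) (FractionRing (WittVector p k)) (u i))) • h i = 0 := by
        simp_rw [sub_smul, Finset.sum_sub_distrib, ← e1, ← e2, sub_self]
      have h1 := hindh _ h0
      intro i
      have h2 := congrFun h1 i
      simp only [Pi.zero_apply] at h2
      exact sub_eq_zero.mp h2
    have hx : ∀ i, ∃ v : WittVector p k, (p : WittVector p k) ^ ((r - d i).toNat) * v = w i := by
      intro i
      by_cases hrd : r ≤ d i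
      · refine ⟨w i, ?_⟩
        have ht : (r - d i).toNat = 0 := by omega
        rw [ht, pow_zero, one_mul]
      · push_neg at hrd
        refine ⟨(WittVector.frobeniusEquiv p k).symm (u i), ?_⟩
        have h5 : (p : FractionRing (WittVector p k)) ^ (d i) *
            algebraMap (WittVector p k) (FractionRing (WittVector p k))
              (WittVector.frobeniusEquiv p k (w i)) =
            (p : FractionRing (WittVector p k)) ^ (d i) *
            algebraMap (WittVector p k) (FractionRing (WittVector p k))
              ((p : WittVector p k) ^ ((r - d i).toNat) * u i) := by
          rw [e3 i]
          simp only [map_mul, map_pow, map_natCast]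
          rw [← mul_assoc]
          congr 1
          rw [← zpow_natCast (p : FractionRing (WittVector p k)) ((r - d i).toNat),
            ← zpow_add₀ hpB]
          congr 1
          omega
        have h4 := hAinj (mul_left_cancel₀ (zpow_ne_zero (d i) hpB) h5)
        have h6 := congrArg (WittVector.frobeniusEquiv p k).symm h4
        rw [RingEquiv.symm_apply_apply] at h6
        rw [h6, map_mul, map_pow, map_natCast]
    choose v hv using hx
    refine ⟨v, ?_⟩
    rw [ELin_apply, hw]
    exact Finset.sum_congr rfl fun i _ => by rw [hv i]
  -- assemble the equivalences
  have hbij : ∀ r : ℤ, Function.Bijective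
      (LinearMap.codRestrict (crystalComponent p k D ϕ L σB hσB hadd hsemi r)
        (ELin p k D d g r) (hmem r)) := by
    intro r
    constructor
    · intro x y hxy
      have h1 : ELin p k D d g r x = ELin p k D d g r y := by
        have := congrArg (Subtype.val) hxy
        exact this
      have h2 : ELin p k D d g r (x - y) = 0 := by
        rw [map_sub, h1, sub_self]
      have := hker r _ h2
      exact sub_eq_zero.mp (by rw [this]) -- x - y = 0 → x = y
    · rintro ⟨y, hy⟩
      obtain ⟨x, hx⟩ := hsurj r y hy
      exact ⟨x, Subtype.ext hx⟩
  refine ⟨fun r => LinearEquiv.ofBijective _ (hbij r), fun r x => rfl, ?_, ?_⟩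
  · intro r x
    show ELin p k D d g (r+1) _ = (p : WittVector p k) • ELin p k D d g r x
    rw [ELin_apply, ELin_apply, Finset.smul_sum]
    refine Finset.sum_congr rfl fun i _ => ?_
    rw [smul_smul]
    congr 1
    by_cases hd : d i ≤ r
    · simp only [if_pos hd]
      have ht : (r + 1 - d i).toNat = (r - d i).toNat + 1 := by omega
      rw [ht, pow_succ]
      ring
    · simp only [if_neg hd]
      have h1 : (r + 1 - d i).toNat = 0 := by omega
      have h2 : (r - d i).toNat = 0 := by omega
      rw [h1, h2]
      ring
  · intro r x
    show ELin p k D d g r _ = ELin p k D d g (r+1) x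
    rw [ELin_apply, ELin_apply]
    refine Finset.sum_congr rfl fun i _ => ?_
    congr 1
    by_cases hd : r + 1 ≤ d i
    · simp only [if_pos hd]
      have h1 : (r - d i).toNat = 0 := by omega
      have h2 : (r + 1 - d i).toNat = 0 := by omega
      rw [h1, h2]
    · simp only [if_neg hd]
      have ht : (r + 1 - d i).toNat = (r - d i).toNat + 1 := by omega
      rw [ht, pow_succ]
      ring

end CoreLemma

section MP

variable (p : ℕ) [hp : Fact p.Prime] (k : Type) [Field k] [CharP k p] [PerfectRing k p]

/-- Components of `f` on a direct sum of standard free gauges. -/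
theorem Sf_apply {n : ℕ} (d : Fin n → ℤ) (r : ℤ)
    (y : Fin n → WittVector p k) :
    (gaugeDirectSum fun i => stdFreeGaugeWitt p k (d i)).f r y
      = fun i => if d i ≤ r then y i else (p : WittVector p k) * y i := by
  funext i
  show ((stdFreeGaugeWitt p k (d i)).f r) (y i) = _
  show (if d i ≤ r then LinearMap.id else
    ((p : WittVector p k) • (LinearMap.id : WittVector p k →ₗ[WittVector p k] WittVector p k)))
      (y i) = _
  split_ifs with hd
  · rfl
  · simp [smul_eq_mul]

/-- Components of `v` on a direct sum of standard free gauges. -/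
theorem Sv_apply {n : ℕ} (d : Fin n → ℤ) (r : ℤ)
    (y : Fin n → WittVector p k) :
    (gaugeDirectSum fun i => stdFreeGaugeWitt p k (d i)).v r y
      = fun i => if r + 1 ≤ d i then y i else (p : WittVector p k) * y i := by
  funext i
  show ((stdFreeGaugeWitt p k (d i)).v r) (y i) = _
  show (if r + 1 ≤ d i then LinearMap.id else
    ((p : WittVector p k) • (LinearMap.id : WittVector p k →ₗ[WittVector p k] WittVector p k)))
      (y i) = _
  split_ifs with hd
  · rfl
  · simp [smul_eq_mul]

theorem free_implies_crystal
    (σB : (FractionRing (WittVector p k)) ≃+* (FractionRing (WittVector p k)))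
    (hσB : ∀ w : (WittVector p k), σB ((algebraMap (WittVector p k) (FractionRing (WittVector p k))) w) = (algebraMap (WittVector p k) (FractionRing (WittVector p k))) ((WittVector.frobeniusEquiv p k) w))
    (G : GaugeData (WittVector p k) p) (a b : ℤ)
    {n : ℕ} (d : Fin n → ℤ) (hda : ∀ i, a ≤ d i) (hdb : ∀ i, d i ≤ b)
    (e0 : ∀ r : ℤ, G.M r ≃ₗ[(WittVector p k)] ((gaugeDirectSum fun i => stdFreeGaugeWitt p k (d i)).M r))
    (hf : ∀ (r : ℤ) (x : G.M r),
      e0 (r + 1) (G.f r x) = (gaugeDirectSum fun i => stdFreeGaugeWitt p k (d i)).f r (e0 r x))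
    (hv : ∀ (r : ℤ) (x : G.M (r + 1)),
      e0 r (G.v r x) = (gaugeDirectSum fun i => stdFreeGaugeWitt p k (d i)).v r (e0 (r + 1) x))
    (φ : G.M b → G.M a) (hφadd : ∀ x y, φ (x + y) = φ x + φ y)
    (hφbij : Function.Bijective φ)
    (hφsemi : ∀ (c : (WittVector p k)) (x : G.M b), φ (c • x) = ((WittVector.frobeniusEquiv p k) c) • φ x) :
    ∃ C : VirtualCrystal p k σB,
        ((p : (FractionRing (WittVector p k))) ^ b • (C.L : Set C.D) ⊆ C.phi '' (C.L : Set C.D)) ∧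
        (C.phi '' (C.L : Set C.D) ⊆ (p : (FractionRing (WittVector p k))) ^ a • (C.L : Set C.D)) ∧
        ∃ e : ∀ r : ℤ, G.M r ≃ₗ[(WittVector p k)]
            ↥(crystalComponent p k C.D C.phi C.L σB hσB C.phi_add C.phi_semi r),
          (∀ (r : ℤ) (x : G.M r),
            ((e (r + 1)) (G.f r x) : C.D) = (p : (WittVector p k)) • ((e r x : C.D))) ∧
          (∀ (r : ℤ) (x : G.M (r + 1)), ((e r (G.v r x)) : C.D) = ((e (r + 1) x : C.D))) ∧
          (∀ x : G.M b, C.phi ((e b x : C.D)) = (p : (FractionRing (WittVector p k))) ^ b • ((e a (φ x) : C.D))) := by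
  classical
  have hpB : (p : (FractionRing (WittVector p k))) ≠ 0 := WittVector.FractionRing.p_nonzero p k
  have hpW : (p : (WittVector p k)) ≠ 0 := WittVector.p_nonzero p k
  have hAinj : Function.Injective (algebraMap (WittVector p k) (FractionRing (WittVector p k))) := IsFractionRing.injective (WittVector p k) (FractionRing (WittVector p k))
  set ℓ : (Fin n → (WittVector p k)) →ₗ[(WittVector p k)] (Fin n → (FractionRing (WittVector p k))) :=
    LinearMap.pi (fun i => (Algebra.linearMap (WittVector p k) (FractionRing (WittVector p k))).comp (LinearMap.proj i)) with hℓdef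
  have hℓ : ∀ (w : Fin n → (WittVector p k)) (j : Fin n), ℓ w j = (algebraMap (WittVector p k) (FractionRing (WittVector p k))) (w j) := fun w j => rfl
  have hℓinj : Function.Injective ℓ := by
    intro x y hxy
    funext j
    exact hAinj (congrFun hxy j)
  have hwsum : ∀ w : Fin n → (WittVector p k), ∑ i, Pi.single i (w i) = w := fun w =>
    Finset.univ_sum_single w
  have hsingle : ∀ (i : Fin n) (c : (WittVector p k)), Pi.single i c = c • (Pi.single i 1 : Fin n → (WittVector p k)) := by
    intro i c
    funext j
    by_cases hji : j = i
    · subst hji; simp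
    · simp [Pi.single_apply, hji]
  have hwsum' : ∀ w : Fin n → (WittVector p k), ∑ i, w i • (Pi.single i 1 : Fin n → (WittVector p k)) = w := by
    intro w
    conv_rhs => rw [← hwsum w]
    exact Finset.sum_congr rfl fun i _ => (hsingle i (w i)).symm
  set φ' : (Fin n → (WittVector p k)) → (Fin n → (WittVector p k)) := fun x => e0 a (φ ((e0 b).symm x)) with hφ'def
  have hφ'add : ∀ x y, φ' (x + y) = φ' x + φ' y := by
    intro x y
    exact (congrArg (fun z => e0 a (φ z)) (map_add (e0 b).symm x y)).trans
      ((congrArg (e0 a) (hφadd _ _)).trans (map_add (e0 a) _ _))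
  have hφ'semi : ∀ (c : (WittVector p k)) (x : Fin n → (WittVector p k)), φ' (c • x) = (WittVector.frobeniusEquiv p k) c • φ' x := by
    intro c x
    exact (congrArg (fun z => e0 a (φ z)) (map_smul (e0 b).symm c x)).trans
      ((congrArg (e0 a) (hφsemi _ _)).trans (map_smul (e0 a) _ _))
  have hφ'bij : Function.Bijective φ' :=
    (e0 a).bijective.comp (hφbij.comp (e0 b).symm.bijective)
  have hφ'zero : φ' 0 = 0 := by
    have h := hφ'add 0 0
    rw [add_zero] at h
    exact (left_eq_add.mp h)
  have hφ'sum : ∀ w : Fin n → (WittVector p k), φ' w = ∑ i, (WittVector.frobeniusEquiv p k) (w i) • φ' (Pi.single i 1) := by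
    intro w
    conv_lhs => rw [← hwsum' w]
    have h := map_sum (AddMonoidHom.mk' φ' hφ'add)
      (fun i => w i • (Pi.single i 1 : Fin n → (WittVector p k))) Finset.univ
    simp only [AddMonoidHom.mk'_apply] at h
    rw [h]
    exact Finset.sum_congr rfl fun i _ => hφ'semi (w i) _
  set hhat : Fin n → (Fin n → (FractionRing (WittVector p k))) := fun i => ℓ (φ' (Pi.single i 1)) with hhatdef
  set g : Fin n → (Fin n → (FractionRing (WittVector p k))) := fun i => ℓ (Pi.single i 1) with hgdef
  have hℓsum : ∀ w : Fin n → (WittVector p k), ℓ w = ∑ i, w i • g i := by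
    intro w
    conv_lhs => rw [← hwsum' w]
    rw [map_sum]
    exact Finset.sum_congr rfl fun i _ => by rw [map_smul]
  have hℓφ'sum : ∀ w : Fin n → (WittVector p k), ℓ (φ' w) = ∑ i, (WittVector.frobeniusEquiv p k) (w i) • hhat i := by
    intro w
    rw [hφ'sum w, map_sum]
    exact Finset.sum_congr rfl fun i _ => by rw [map_smul]
  have hgapply : ∀ i j, g i j = if j = i then 1 else 0 := by
    intro i j
    simp only [hgdef]
    rw [hℓ, Pi.single_apply]
    split_ifs
    · exact map_one _
    · exact map_zero _
  have hgsum : ∀ c : Fin n → (FractionRing (WittVector p k)), ∑ i, c i • g i = c := by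
    intro c
    funext j
    rw [Finset.sum_apply]
    rw [Finset.sum_eq_single j]
    · rw [Pi.smul_apply, hgapply j j, if_pos rfl, smul_eq_mul, mul_one]
    · intro i _ hij
      rw [Pi.smul_apply, hgapply i j, if_neg (fun hh => hij hh.symm), smul_eq_mul, mul_zero]
    · intro hj
      exact absurd (Finset.mem_univ j) hj
  have hindhW : ∀ w : Fin n → (WittVector p k), ∑ i, w i • hhat i = 0 → w = 0 := by
    intro w hw
    have hq : ∑ i, w i • φ' (Pi.single i 1) = 0 := by
      apply hℓinj
      rw [map_sum, map_zero]
      simpa only [map_smul] using hw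
    have h2 : φ' (fun i => (WittVector.frobeniusEquiv p k).symm (w i)) = 0 := by
      rw [hφ'sum]
      simp only [RingEquiv.apply_symm_apply]
      exact hq
    have h3 := hφ'bij.1 (h2.trans hφ'zero.symm)
    funext i
    have h4 := congrFun h3 i
    simp only [Pi.zero_apply] at h4
    have h5 := congrArg (WittVector.frobeniusEquiv p k) h4
    rw [RingEquiv.apply_symm_apply, map_zero] at h5
    exact h5
  have hindh : ∀ c : Fin n → (FractionRing (WittVector p k)), ∑ i, c i • hhat i = 0 → c = 0 :=
    fun c hc => aux_windep_bindep p k hhat hindhW c hc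
  have hindg : ∀ c : Fin n → (FractionRing (WittVector p k)), ∑ i, c i • g i = 0 → c = 0 := by
    intro c hc
    rw [hgsum c] at hc
    exact hc
  set ϕD : (Fin n → (FractionRing (WittVector p k))) → (Fin n → (FractionRing (WittVector p k))) :=
    fun y => ∑ i, (σB (y i) * (p : (FractionRing (WittVector p k))) ^ (d i)) • hhat i with hϕDdef
  have hϕD_eq : ∀ y, ϕD y = ∑ i, (σB (y i) * (p : (FractionRing (WittVector p k))) ^ (d i)) • hhat i := fun y => rfl
  have hϕD_add : ∀ x y, ϕD (x + y) = ϕD x + ϕD y := by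
    intro x y
    simp only [hϕDdef, Pi.add_apply, map_add, add_mul, add_smul, Finset.sum_add_distrib]
  have hϕD_semi : ∀ (c : (FractionRing (WittVector p k))) (x : Fin n → (FractionRing (WittVector p k))), ϕD (c • x) = σB c • ϕD x := by
    intro c x
    simp only [hϕDdef, Pi.smul_apply, smul_eq_mul, map_mul, Finset.smul_sum, mul_assoc, mul_smul]
  have hϕD_inj : Function.Injective ϕD := by
    intro x y hxy
    have h0 : ∑ i, ((σB (x i) - σB (y i)) * (p : (FractionRing (WittVector p k))) ^ (d i)) • hhat i = 0 := by
      simp only [sub_mul, sub_smul, Finset.sum_sub_distrib]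
      rw [← hϕD_eq x, ← hϕD_eq y, hxy, sub_self]
    have h1 := hindh _ h0
    funext i
    have h2 := congrFun h1 i
    simp only [Pi.zero_apply] at h2
    rcases mul_eq_zero.mp h2 with h3 | h3
    · exact σB.injective (sub_eq_zero.mp h3)
    · exact absurd h3 (zpow_ne_zero _ hpB)
  have hϕD_surj : Function.Surjective ϕD := by
    set A : (Fin n → (FractionRing (WittVector p k))) →ₗ[(FractionRing (WittVector p k))] (Fin n → (FractionRing (WittVector p k))) :=
      { toFun := fun c => ∑ i, c i • hhat i
        map_add' := by
          intro x y
          simp only [Pi.add_apply, add_smul, Finset.sum_add_distrib]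
        map_smul' := by
          intro c x
          simp only [Pi.smul_apply, smul_eq_mul, RingHom.id_apply, Finset.smul_sum, mul_smul] }
      with hAdef
    have hAinj' : Function.Injective A := by
      rw [← LinearMap.ker_eq_bot, LinearMap.ker_eq_bot']
      intro c hc
      exact hindh c hc
    have hAsurj : Function.Surjective A :=
      (LinearMap.injective_iff_surjective_of_finrank_eq_finrank rfl).mp hAinj'
    intro z
    obtain ⟨c, hc⟩ := hAsurj z
    refine ⟨fun i => σB.symm (c i / (p : (FractionRing (WittVector p k))) ^ (d i)), ?_⟩
    rw [hϕD_eq, ← hc]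
    show _ = ∑ i, c i • hhat i
    refine Finset.sum_congr rfl fun i _ => ?_
    congr 1
    rw [RingEquiv.apply_symm_apply, div_mul_cancel₀ _ (zpow_ne_zero _ hpB)]
  set L : Submodule (WittVector p k) (Fin n → (FractionRing (WittVector p k))) := LinearMap.range ℓ with hLdef
  have hLfg : L.FG := by
    rw [hLdef, LinearMap.range_eq_map]
    exact Submodule.FG.map ℓ Module.Finite.fg_top
  have hLspan : Submodule.span (FractionRing (WittVector p k)) (L : Set (Fin n → (FractionRing (WittVector p k)))) = ⊤ := by
    rw [eq_top_iff]
    intro x _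
    have hx : x = ∑ i, x i • g i := (hgsum x).symm
    rw [hx]
    refine Submodule.sum_mem _ fun i _ => Submodule.smul_mem _ _ ?_
    exact Submodule.subset_span ⟨Pi.single i 1, rfl⟩
  have hgL : ∀ i, g i ∈ L := fun i => ⟨Pi.single i 1, rfl⟩
  have hhL : ∀ i, hhat i ∈ L := fun i => ⟨φ' (Pi.single i 1), rfl⟩
  have hgspan : ∀ x ∈ L, ∃ w : Fin n → (WittVector p k), x = ∑ i, w i • g i := by
    rintro x ⟨w, rfl⟩
    exact ⟨w, hℓsum w⟩
  have hhspan : ∀ x ∈ L, ∃ w : Fin n → (WittVector p k), x = ∑ i, w i • hhat i := by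
    rintro x ⟨w, rfl⟩
    obtain ⟨v, hv⟩ := hφ'bij.2 w
    refine ⟨fun i => (WittVector.frobeniusEquiv p k) (v i), ?_⟩
    rw [← hv, hℓφ'sum]
  have hϕg : ∀ i, ϕD (g i) = ((p : (FractionRing (WittVector p k))) ^ (d i)) • hhat i := by
    intro i
    rw [hϕD_eq]
    rw [Finset.sum_eq_single i]
    · rw [hgapply i i, if_pos rfl, map_one, one_mul]
    · intro j _ hji
      rw [hgapply i j, if_neg (fun hh => hji hh), map_zero, zero_mul, zero_smul]
    · intro hj
      exact absurd (Finset.mem_univ i) hj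
  have hϕDℓ : ∀ w : Fin n → (WittVector p k), ϕD (ℓ w) = ∑ i, ((algebraMap (WittVector p k) (FractionRing (WittVector p k))) ((WittVector.frobeniusEquiv p k) (w i)) * (p : (FractionRing (WittVector p k))) ^ (d i)) • hhat i := by
    intro w
    rw [hϕD_eq]
    refine Finset.sum_congr rfl fun i _ => ?_
    rw [hℓ w i, hσB]
  have hsand2 : ϕD '' (L : Set (Fin n → (FractionRing (WittVector p k)))) ⊆ (p : (FractionRing (WittVector p k))) ^ a • (L : Set (Fin n → (FractionRing (WittVector p k)))) := by
    rintro z ⟨x, hxL, rfl⟩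
    obtain ⟨w, rfl⟩ := hxL
    refine Set.mem_smul_set.mpr
      ⟨∑ i, ((p : (WittVector p k)) ^ ((d i - a).toNat) * (WittVector.frobeniusEquiv p k) (w i)) • hhat i,
        Submodule.sum_mem _ fun i _ => L.smul_mem _ (hhL i), ?_⟩
    rw [Finset.smul_sum, hϕDℓ]
    refine Finset.sum_congr rfl fun i _ => ?_
    rw [← algebraMap_smul (FractionRing (WittVector p k)) ((p : (WittVector p k)) ^ ((d i - a).toNat) * (WittVector.frobeniusEquiv p k) (w i)) (hhat i), smul_smul]
    congr 1
    rw [map_mul, map_pow, map_natCast, ← zpow_natCast (p : (FractionRing (WittVector p k))) ((d i - a).toNat),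
      ← mul_assoc, ← zpow_add₀ hpB]
    have hexp : a + ((d i - a).toNat : ℤ) = d i := by have := hda i; omega
    rw [hexp, mul_comm]
  have hsand1 : (p : (FractionRing (WittVector p k))) ^ b • (L : Set (Fin n → (FractionRing (WittVector p k)))) ⊆ ϕD '' (L : Set (Fin n → (FractionRing (WittVector p k)))) := by
    intro z hz
    obtain ⟨x, hxL, rfl⟩ := Set.mem_smul_set.mp hz
    obtain ⟨w, rfl⟩ := hxL
    obtain ⟨v, hv⟩ := hφ'bij.2 w
    refine ⟨ℓ (fun i => (p : (WittVector p k)) ^ ((b - d i).toNat) * v i), ⟨_, rfl⟩, ?_⟩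
    rw [hϕDℓ, ← hv, hℓφ'sum, Finset.smul_sum]
    refine Finset.sum_congr rfl fun i _ => ?_
    rw [← algebraMap_smul (FractionRing (WittVector p k)) ((WittVector.frobeniusEquiv p k) (v i)) (hhat i), smul_smul]
    congr 1
    simp only [map_mul, map_pow, map_natCast]
    rw [← zpow_natCast (p : (FractionRing (WittVector p k))) ((b - d i).toNat), mul_right_comm, ← zpow_add₀ hpB]
    have hexp : ((b - d i).toNat : ℤ) + d i = b := by have := hdb i; omega
    rw [hexp, mul_comm]
  obtain ⟨E, hE, hEf, hEv⟩ := core_lemma p k (Fin n → (FractionRing (WittVector p k))) d g σB hσB ϕD L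
    hϕD_add hϕD_semi hϕD_inj hhat hgL hhL hgspan hhspan hindg hindh hϕg
  refine ⟨{ D := Fin n → (FractionRing (WittVector p k))
            phi := ϕD
            phi_add := hϕD_add
            phi_bij := ⟨hϕD_inj, hϕD_surj⟩
            phi_semi := hϕD_semi
            L := L
            L_fg := hLfg
            L_span := hLspan }, hsand1, hsand2,
    ⟨fun r => (e0 r).trans (E r), ?_, ?_, ?_⟩⟩
  · intro r x
    show (E (r + 1) (e0 (r + 1) (G.f r x)) : Fin n → (FractionRing (WittVector p k)))
      = (p : (WittVector p k)) • (E r (e0 r x) : Fin n → (FractionRing (WittVector p k)))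
    rw [hf r x, Sf_apply p k d r (e0 r x)]
    exact hEf r (e0 r x)
  · intro r x
    show (E r (e0 r (G.v r x)) : Fin n → (FractionRing (WittVector p k))) = (E (r + 1) (e0 (r + 1) x) : Fin n → (FractionRing (WittVector p k)))
    rw [hv r x, Sv_apply p k d r (e0 (r + 1) x)]
    exact hEv r (e0 (r + 1) x)
  · intro x
    obtain ⟨y, hy⟩ : ∃ y : Fin n → (WittVector p k), y = e0 b x := ⟨e0 b x, rfl⟩
    show ϕD (E b (e0 b x) : Fin n → (FractionRing (WittVector p k))) = (p : (FractionRing (WittVector p k))) ^ b • (E a (e0 a (φ x)) : Fin n → (FractionRing (WittVector p k)))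
    rw [← hy]
    have h1 : (E b y : Fin n → (FractionRing (WittVector p k)))
        = ℓ (fun i => (p : (WittVector p k)) ^ ((b - d i).toNat) * y i) := by
      rw [hE b y, hℓsum]
    have h2 : φ' y = e0 a (φ x) := by
      rw [hy]
      show e0 a (φ ((e0 b).symm (e0 b x))) = _
      rw [LinearEquiv.symm_apply_apply]
    have h3 : (E a (φ' y) : Fin n → (FractionRing (WittVector p k))) = ℓ (φ' y) := by
      rw [hE a (φ' y), hℓsum (φ' y)]
      refine Finset.sum_congr rfl fun i _ => ?_
      congr 1
      have ht : (a - d i).toNat = 0 := by have := hda i; omega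
      rw [ht, pow_zero, one_mul]
    rw [h1, ← h2, h3, hℓφ'sum y, hϕDℓ, Finset.smul_sum]
    refine Finset.sum_congr rfl fun i _ => ?_
    rw [← algebraMap_smul (FractionRing (WittVector p k)) ((WittVector.frobeniusEquiv p k) (y i)) (hhat i), smul_smul]
    congr 1
    simp only [map_mul, map_pow, map_natCast]
    rw [← zpow_natCast (p : (FractionRing (WittVector p k))) ((b - d i).toNat), mul_right_comm, ← zpow_add₀ hpB]
    have hexp : ((b - d i).toNat : ℤ) + d i = b := by have := hdb i; omega
    rw [hexp, mul_comm]

theorem crystal_implies_free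
    (σB : (FractionRing (WittVector p k)) ≃+* (FractionRing (WittVector p k)))
    (hσB : ∀ w : (WittVector p k), σB ((algebraMap (WittVector p k) (FractionRing (WittVector p k))) w) = (algebraMap (WittVector p k) (FractionRing (WittVector p k))) ((WittVector.frobeniusEquiv p k) w))
    (G : GaugeData (WittVector p k) p) (a b : ℤ) (C : VirtualCrystal p k σB)
    (hsub1 : (p : (FractionRing (WittVector p k))) ^ b • (C.L : Set C.D) ⊆ C.phi '' (C.L : Set C.D))
    (hsub2 : C.phi '' (C.L : Set C.D) ⊆ (p : (FractionRing (WittVector p k))) ^ a • (C.L : Set C.D))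
    (e : ∀ r : ℤ, G.M r ≃ₗ[(WittVector p k)]
      ↥(crystalComponent p k C.D C.phi C.L σB hσB C.phi_add C.phi_semi r))
    (hef : ∀ (r : ℤ) (x : G.M r), ((e (r + 1)) (G.f r x) : C.D) = (p : (WittVector p k)) • ((e r x : C.D)))
    (hev : ∀ (r : ℤ) (x : G.M (r + 1)), ((e r (G.v r x)) : C.D) = ((e (r + 1) x : C.D))) :
    G.IsFreeWitt := by
  classical
  have hpB : (p : (FractionRing (WittVector p k))) ≠ 0 := WittVector.FractionRing.p_nonzero p k
  have hpW : (p : (WittVector p k)) ≠ 0 := WittVector.p_nonzero p k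
  have hAinj : Function.Injective (algebraMap (WittVector p k) (FractionRing (WittVector p k))) := IsFractionRing.injective (WittVector p k) (FractionRing (WittVector p k))
  haveI hDVR : IsDiscreteValuationRing (WittVector p k) := WittVector.isDiscreteValuationRing
  have hphi0 : C.phi 0 = 0 := by
    have h := C.phi_add 0 0
    rw [add_zero] at h
    exact (left_eq_add.mp h)
  haveI : NoZeroSMulDivisors (WittVector p k) C.D := by
    constructor
    intro c x hcx
    by_cases hc : c = 0
    · exact Or.inl hc
    · right
      have h1 : (algebraMap (WittVector p k) (FractionRing (WittVector p k)) c) • x = 0 := by rw [algebraMap_smul]; exact hcx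
      have h2 : algebraMap (WittVector p k) (FractionRing (WittVector p k)) c ≠ 0 := fun h => hc (hAinj (by rw [h, map_zero]))
      exact (smul_eq_zero.mp h1).resolve_left h2
  haveI : Module.Finite (WittVector p k) ↥C.L := Module.Finite.iff_fg.mpr C.L_fg
  haveI : Module.Free (WittVector p k) ↥C.L := Module.free_of_finite_type_torsion_free'
  haveI : FiniteDimensional (FractionRing (WittVector p k)) C.D := C.finB
  set ι := Module.Free.ChooseBasisIndex (WittVector p k) ↥C.L with hιdef
  set bL : Module.Basis ι (WittVector p k) ↥C.L := Module.Free.chooseBasis (WittVector p k) ↥C.L with hbLdef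
  -- the scaling map by p^(-a)
  obtain ⟨sca, hsca⟩ : ∃ f : C.D →ₗ[(WittVector p k)] C.D, ∀ x, f x = (p : (FractionRing (WittVector p k))) ^ (-a) • x := by
    refine ⟨{ toFun := fun x => (p : (FractionRing (WittVector p k))) ^ (-a) • x
              map_add' := smul_add _
              map_smul' := ?_ }, fun x => rfl⟩
    intro w x
    simp only [RingHom.id_apply]
    exact (aux_smul_comm p k w ((p : (FractionRing (WittVector p k))) ^ (-a)) x).symm
  -- the image ϕ(L) as a submodule
  obtain ⟨phiL, hphiLcar⟩ : ∃ phiL : Submodule (WittVector p k) C.D,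
      (phiL : Set C.D) = C.phi '' (C.L : Set C.D) := by
    refine ⟨{ carrier := Set.image C.phi (C.L : Set C.D)
              add_mem' := ?_
              zero_mem' := ?_
              smul_mem' := ?_ }, rfl⟩
    · rintro x y ⟨u, hu, rfl⟩ ⟨v, hv, rfl⟩
      exact ⟨u + v, C.L.add_mem hu hv, C.phi_add u v⟩
    · exact ⟨0, C.L.zero_mem, hphi0⟩
    · rintro w x ⟨u, hu, rfl⟩
      refine ⟨((WittVector.frobeniusEquiv p k).symm w) • u, C.L.smul_mem _ hu, ?_⟩
      rw [← algebraMap_smul (FractionRing (WittVector p k)) (((WittVector.frobeniusEquiv p k)).symm w) u, C.phi_semi, hσB, RingEquiv.apply_symm_apply,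
        algebraMap_smul]
  set N : Submodule (WittVector p k) C.D := Submodule.map sca phiL with hNdef
  have hmemN : ∀ y, y ∈ phiL → (p : (FractionRing (WittVector p k))) ^ (-a) • y ∈ N := by
    intro y hy
    exact ⟨y, hy, (hsca y).symm ▸ rfl⟩
  have hNscaled : ∀ zz ∈ N, (p : (FractionRing (WittVector p k))) ^ a • zz ∈ C.phi '' (C.L : Set C.D) := by
    intro zz hzz
    obtain ⟨y, hy, rfl⟩ := Submodule.mem_map.mp hzz
    rw [hsca, smul_smul, ← zpow_add₀ hpB, (by omega : a + -a = 0), zpow_zero, one_smul]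
    rw [← hphiLcar]
    exact hy
  have hNleL : N ≤ C.L := by
    intro zz hzz
    have h2 := hsub2 (hNscaled zz hzz)
    obtain ⟨u, huL, hu⟩ := Set.mem_smul_set.mp h2
    have h3 : u = zz := smul_right_injective C.D (zpow_ne_zero a hpB) hu
    rw [← h3]
    exact huL
  set N' : Submodule (WittVector p k) ↥C.L := N.comap C.L.subtype with hN'def
  obtain ⟨m, bM, bN, femb, aa, hsnf⟩ := Submodule.smithNormalForm bL N'
  set z : Fin m → C.D := fun j => ((bN j : ↥C.L) : C.D) with hzdef
  have hzN : ∀ j, z j ∈ N := fun j => Submodule.mem_comap.mp (bN j).2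
  have hzL : ∀ j, z j ∈ C.L := fun j => ((bN j : ↥C.L)).2
  -- coercion of sums of basis elements
  have hcoeM : ∀ (w : ι → (WittVector p k)) (t : ↥C.L), t = ∑ i, w i • bM i →
      (t : C.D) = ∑ i, w i • ((bM i : C.D)) := by
    intro w t ht
    have h1 := congrArg (C.L.subtype) ht
    rw [map_sum] at h1
    simpa only [map_smul, Submodule.subtype_apply] using h1
  have hcoeN : ∀ (w : Fin m → (WittVector p k)) (t : ↥N'), t = ∑ j, w j • bN j →
      ((t : ↥C.L) : C.D) = ∑ j, w j • z j := by
    intro w t ht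
    have h1 := congrArg (C.L.subtype ∘ₗ N'.subtype) ht
    rw [map_sum] at h1
    simpa only [map_smul, LinearMap.comp_apply, Submodule.subtype_apply] using h1
  -- W-independence of the coerced bases
  have hWindM : ∀ w : ι → (WittVector p k), ∑ i, w i • ((bM i : C.D)) = 0 → w = 0 := by
    intro w hw
    have h1 : C.L.subtype (∑ i, w i • bM i) = 0 := by
      rw [map_sum]
      simpa only [map_smul, Submodule.subtype_apply] using hw
    have h2 : ∑ i, w i • bM i = 0 := C.L.injective_subtype (by rw [h1, map_zero])
    have h3 := Fintype.linearIndependent_iff.mp bM.linearIndependent w h2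
    funext i
    exact h3 i
  have hWindN : ∀ w : Fin m → (WittVector p k), ∑ j, w j • z j = 0 → w = 0 := by
    intro w hw
    have h1 : (C.L.subtype ∘ₗ N'.subtype) (∑ j, w j • bN j) = 0 := by
      rw [map_sum]
      simpa only [map_smul, LinearMap.comp_apply, Submodule.subtype_apply] using hw
    have h2 : ∑ j, w j • bN j = 0 := by
      have hinj : Function.Injective (C.L.subtype ∘ₗ N'.subtype) :=
        C.L.injective_subtype.comp N'.injective_subtype
      exact hinj (by rw [h1, map_zero])
    have h3 := Fintype.linearIndependent_iff.mp bN.linearIndependent w h2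
    funext j
    exact h3 j
  have hBindM : ∀ c : ι → (FractionRing (WittVector p k)), ∑ i, c i • ((bM i : C.D)) = 0 → c = 0 :=
    fun c hc => aux_windep_bindep p k _ hWindM c hc
  have hBindN : ∀ c : Fin m → (FractionRing (WittVector p k)), ∑ j, c j • z j = 0 → c = 0 :=
    fun c hc => aux_windep_bindep p k _ hWindN c hc
  -- spanning over B
  have hspanM : ⊤ ≤ Submodule.span (FractionRing (WittVector p k)) (Set.range fun i => ((bM i : C.D))) := by
    rw [← C.L_span]
    apply Submodule.span_le.mpr
    intro x hx
    have h1 : (⟨x, hx⟩ : ↥C.L) = ∑ i, (bM.repr ⟨x, hx⟩ i) • bM i := (bM.sum_repr ⟨x, hx⟩).symm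
    have h2' : x = ∑ i, (bM.repr ⟨x, hx⟩ i) • ((bM i : C.D)) := hcoeM _ _ h1
    rw [h2']
    refine Submodule.sum_mem _ fun i _ => ?_
    rw [← algebraMap_smul (FractionRing (WittVector p k)) (bM.repr ⟨x, hx⟩ i)]
    exact Submodule.smul_mem _ _ (Submodule.subset_span ⟨i, rfl⟩)
  have hNspan : ∀ y ∈ N, ∃ w : Fin m → (WittVector p k), y = ∑ j, w j • z j := by
    intro y hy
    have hyL : y ∈ C.L := hNleL hy
    have hyN' : (⟨y, hyL⟩ : ↥C.L) ∈ N' := Submodule.mem_comap.mpr hy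
    have h1 : (⟨⟨y, hyL⟩, hyN'⟩ : ↥N') = ∑ j, (bN.repr ⟨⟨y, hyL⟩, hyN'⟩ j) • bN j :=
      (bN.sum_repr _).symm
    exact ⟨fun j => bN.repr ⟨⟨y, hyL⟩, hyN'⟩ j, hcoeN _ _ h1⟩
  have hspanN : ⊤ ≤ Submodule.span (FractionRing (WittVector p k)) (Set.range z) := by
    rw [← C.L_span]
    apply Submodule.span_le.mpr
    intro x hx
    have h1 : (p : (FractionRing (WittVector p k))) ^ b • x ∈ C.phi '' (C.L : Set C.D) :=
      hsub1 (Set.smul_mem_smul_set hx)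
    have h2 : (p : (FractionRing (WittVector p k))) ^ (-a) • ((p : (FractionRing (WittVector p k))) ^ b • x) ∈ N := by
      apply hmemN
      rw [← SetLike.mem_coe, hphiLcar]
      exact h1
    obtain ⟨w, hw⟩ := hNspan _ h2
    have h3 : x = (p : (FractionRing (WittVector p k))) ^ (a - b) • ∑ j, w j • z j := by
      rw [← hw, smul_smul, smul_smul, ← zpow_add₀ hpB, ← zpow_add₀ hpB,
        (by omega : a - b + -a + b = 0), zpow_zero, one_smul]
    rw [SetLike.mem_coe, h3]
    refine Submodule.smul_mem _ _ (Submodule.sum_mem _ fun j _ => ?_)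
    rw [← algebraMap_smul (FractionRing (WittVector p k)) (w j)]
    exact Submodule.smul_mem _ _ (Submodule.subset_span ⟨j, rfl⟩)
  -- linear independence over B, bases, dimensions
  have hliM : LinearIndependent (FractionRing (WittVector p k)) (fun i => ((bM i : C.D))) :=
    Fintype.linearIndependent_iff.mpr fun g hg => fun i => congrFun (hBindM g hg) i
  have hliN : LinearIndependent (FractionRing (WittVector p k)) z :=
    Fintype.linearIndependent_iff.mpr fun g hg => fun j => congrFun (hBindN g hg) j
  have hfinM : Module.finrank (FractionRing (WittVector p k)) C.D = Fintype.card ι :=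
    Module.finrank_eq_card_basis (Module.Basis.mk hliM hspanM)
  have hfinN : Module.finrank (FractionRing (WittVector p k)) C.D = m := by
    rw [Module.finrank_eq_card_basis (Module.Basis.mk hliN hspanN), Fintype.card_fin]
  have hcard : Fintype.card (Fin m) = Fintype.card ι := by
    rw [Fintype.card_fin, ← hfinM, hfinN]
  have hfbij : Function.Bijective femb :=
    (Fintype.bijective_iff_injective_and_card femb).mpr ⟨femb.injective, hcard⟩
  set eqv : Fin m ≃ ι := Equiv.ofBijective femb hfbij with heqvdef
  -- the diagonal entries are nonzero
  have haane : ∀ j, aa j ≠ 0 := by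
    intro j haj
    have h1 := hsnf j
    rw [haj, zero_smul] at h1
    exact Module.Basis.ne_zero bN j (Subtype.ext h1)
  choose cexp uunit hufact using fun j => WittVector.exists_eq_pow_p_mul' (aa j) (haane j)
  set dd : Fin m → ℤ := fun j => a + (cexp j : ℤ) with hdddef
  set hh : Fin m → C.D := fun j => ((uunit j : (WittVector p k))) • ((bM (femb j) : C.D)) with hhhdef
  have hhhL : ∀ j, hh j ∈ C.L := by
    intro j
    simp only [hhhdef]
    exact C.L.smul_mem _ (bM (femb j)).2
  -- z in terms of bM
  have hzbM : ∀ j, z j = (aa j) • ((bM (femb j) : C.D)) := by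
    intro j
    have h1 := congrArg (C.L.subtype) (hsnf j)
    simpa only [map_smul, Submodule.subtype_apply] using h1
  have hz_eq : ∀ j, (p : (FractionRing (WittVector p k))) ^ a • z j = (p : (FractionRing (WittVector p k))) ^ (dd j) • hh j := by
    intro j
    rw [hzbM j, hufact j, mul_smul, ← algebraMap_smul (FractionRing (WittVector p k)) ((p : (WittVector p k)) ^ (cexp j)), smul_smul,
      map_pow, map_natCast, ← zpow_natCast (p : (FractionRing (WittVector p k))) (cexp j), ← zpow_add₀ hpB]
  -- preimages of the p^a • z j
  have hgex : ∀ j, ∃ gj, gj ∈ C.L ∧ C.phi gj = (p : (FractionRing (WittVector p k))) ^ a • z j := by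
    intro j
    obtain ⟨gj, hgjL, hgj⟩ := hNscaled (z j) (hzN j)
    exact ⟨gj, hgjL, hgj⟩
  choose gg hggL hggphi using hgex
  have hggdd : ∀ j, C.phi (gg j) = (p : (FractionRing (WittVector p k))) ^ (dd j) • hh j :=
    fun j => (hggphi j).trans (hz_eq j)
  -- spanning of L by hh and by gg
  have hhspan : ∀ x ∈ C.L, ∃ w : Fin m → (WittVector p k), x = ∑ j, w j • hh j := by
    intro x hx
    have h1 : (⟨x, hx⟩ : ↥C.L) = ∑ i, (bM.repr ⟨x, hx⟩ i) • bM i := (bM.sum_repr ⟨x, hx⟩).symm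
    have h2 := hcoeM _ _ h1
    refine ⟨fun j => (((uunit j)⁻¹ : (WittVector p k)ˣ) : (WittVector p k)) * bM.repr ⟨x, hx⟩ (femb j), ?_⟩
    have h3 : ∀ j, ((((uunit j)⁻¹ : (WittVector p k)ˣ) : (WittVector p k)) * bM.repr ⟨x, hx⟩ (femb j)) • hh j
        = (bM.repr ⟨x, hx⟩ (femb j)) • ((bM (femb j) : C.D)) := by
      intro j
      simp only [hhhdef]
      rw [smul_smul]
      congr 1
      rw [mul_comm, ← mul_assoc, Units.mul_inv, one_mul]
    calc x = ∑ i, (bM.repr ⟨x, hx⟩ i) • ((bM i : C.D)) := h2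
      _ = ∑ j, (bM.repr ⟨x, hx⟩ (eqv j)) • ((bM (eqv j) : C.D)) := (Equiv.sum_comp eqv _).symm
      _ = ∑ j, ((((uunit j)⁻¹ : (WittVector p k)ˣ) : (WittVector p k)) * bM.repr ⟨x, hx⟩ (femb j)) • hh j :=
        Finset.sum_congr rfl fun j _ => (h3 j).symm
  have hgspan : ∀ x ∈ C.L, ∃ w : Fin m → (WittVector p k), x = ∑ j, w j • gg j := by
    intro x hx
    have h1 : C.phi x ∈ phiL := by
      rw [← SetLike.mem_coe, hphiLcar]
      exact ⟨x, hx, rfl⟩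
    obtain ⟨w, hw⟩ := hNspan _ (hmemN _ h1)
    have h3 : C.phi x = ∑ j, w j • ((p : (FractionRing (WittVector p k))) ^ a • z j) := by
      have h4 := congrArg (fun t => (p : (FractionRing (WittVector p k))) ^ a • t) hw
      rw [smul_smul, ← zpow_add₀ hpB, (by omega : a + -a = 0), zpow_zero, one_smul] at h4
      rw [h4, Finset.smul_sum]
      exact Finset.sum_congr rfl fun j _ => (aux_smul_comm p k (w j) _ (z j)).symm
    have h5 : C.phi x = C.phi (∑ j, ((WittVector.frobeniusEquiv p k).symm (w j)) • gg j) := by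
      rw [aux_phi_sum_w p k C.phi σB hσB C.phi_add C.phi_semi, h3]
      refine Finset.sum_congr rfl fun j _ => ?_
      rw [RingEquiv.apply_symm_apply, hggphi j, algebraMap_smul]
    exact ⟨fun j => (WittVector.frobeniusEquiv p k).symm (w j), C.phi_bij.1 h5⟩
  -- B-independence of hh and gg
  have hindh : ∀ c : Fin m → (FractionRing (WittVector p k)), ∑ j, c j • hh j = 0 → c = 0 := by
    intro c hc
    have h1 : ∑ i, (fun i => c (eqv.symm i) * (algebraMap (WittVector p k) (FractionRing (WittVector p k))) ((uunit (eqv.symm i) : (WittVector p k)))) i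
        • ((bM i : C.D)) = 0 := by
      rw [← Equiv.sum_comp eqv
        (fun i => (c (eqv.symm i) * (algebraMap (WittVector p k) (FractionRing (WittVector p k))) ((uunit (eqv.symm i) : (WittVector p k)))) • ((bM i : C.D)))]
      simp only [Equiv.symm_apply_apply]
      rw [← hc]
      refine Finset.sum_congr rfl fun j _ => ?_
      rw [mul_smul, algebraMap_smul]
      rfl
    have h2 := hBindM _ h1
    funext j
    have h3 := congrFun h2 (eqv j)
    simp only [Equiv.symm_apply_apply, Pi.zero_apply] at h3
    rcases mul_eq_zero.mp h3 with h4 | h4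
    · exact h4
    · exact absurd h4 (fun hz0 => Units.ne_zero (uunit j) (hAinj (by rw [hz0, map_zero])))
  have hindg : ∀ c : Fin m → (FractionRing (WittVector p k)), ∑ j, c j • gg j = 0 → c = 0 := by
    intro c hc
    have h1 : ∑ j, (σB (c j) * (p : (FractionRing (WittVector p k))) ^ (dd j)) • hh j = 0 := by
      have h2 := congrArg C.phi hc
      rw [aux_phi_sum p k C.phi σB C.phi_add C.phi_semi, hphi0] at h2
      rw [← h2]
      refine Finset.sum_congr rfl fun j _ => ?_
      rw [hggdd j, smul_smul]
    have h2 := hindh _ h1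
    funext j
    have h3 := congrFun h2 j
    simp only [Pi.zero_apply] at h3
    rcases mul_eq_zero.mp h3 with h4 | h4
    · have := σB.injective (by rw [h4, map_zero] : σB (c j) = σB 0)
      exact this
    · exact absurd h4 (zpow_ne_zero _ hpB)
  -- apply the core lemma
  obtain ⟨E, hE, hEf, hEv⟩ := core_lemma p k C.D dd gg σB hσB C.phi C.L
    C.phi_add C.phi_semi C.phi_bij.1 hh hggL hhhL hgspan hhspan hindg hindh hggdd
  refine ⟨m, dd, fun r => (e r).trans (E r).symm, ?_, ?_⟩
  · intro r x
    have hclaim : e (r + 1) (G.f r x)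
        = E (r + 1) ((gaugeDirectSum fun i => stdFreeGaugeWitt p k (dd i)).f r
            ((E r).symm (e r x))) := by
      apply Subtype.ext
      show ((e (r + 1)) (G.f r x) : C.D) = _
      rw [hef r x, Sf_apply p k dd r ((E r).symm (e r x)), hEf r ((E r).symm (e r x)),
        LinearEquiv.apply_symm_apply]
    show (E (r + 1)).symm (e (r + 1) (G.f r x)) = _
    exact (congrArg (E (r + 1)).symm hclaim).trans (LinearEquiv.symm_apply_apply _ _)
  · intro r x
    have hclaim : e r (G.v r x)
        = E r ((gaugeDirectSum fun i => stdFreeGaugeWitt p k (dd i)).v r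
            ((E (r + 1)).symm (e (r + 1) x))) := by
      apply Subtype.ext
      show ((e r) (G.v r x) : C.D) = _
      rw [hev r x, Sv_apply p k dd r ((E (r + 1)).symm (e (r + 1) x)),
        hEv r ((E (r + 1)).symm (e (r + 1) x)), LinearEquiv.apply_symm_apply]
    show (E r).symm (e r (G.v r x)) = _
    exact (congrArg (E r).symm hclaim).trans (LinearEquiv.symm_apply_apply _ _)

theorem conc_bounds
    (G : GaugeData (WittVector p k) p) (a b : ℤ) (hconc : G.ConcentratedIn a b)
    {n : ℕ} (d : Fin n → ℤ)
    (e0 : ∀ r : ℤ, G.M r ≃ₗ[(WittVector p k)] ((gaugeDirectSum fun i => stdFreeGaugeWitt p k (d i)).M r))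
    (hf : ∀ (r : ℤ) (x : G.M r),
      e0 (r + 1) (G.f r x) = (gaugeDirectSum fun i => stdFreeGaugeWitt p k (d i)).f r (e0 r x))
    (hv : ∀ (r : ℤ) (x : G.M (r + 1)),
      e0 r (G.v r x) = (gaugeDirectSum fun i => stdFreeGaugeWitt p k (d i)).v r (e0 (r + 1) x)) :
    (∀ i, a ≤ d i) ∧ (∀ i, d i ≤ b) := by
  classical
  have hpunit : ¬ IsUnit (p : (WittVector p k)) := (WittVector.irreducible p).not_isUnit
  constructor
  · intro i
    by_contra hai
    push_neg at hai
    have hb := hconc.1 (a - 1) (by omega)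
    have hfun : ⇑((gaugeDirectSum fun i => stdFreeGaugeWitt p k (d i)).v (a - 1))
        = fun y => e0 (a - 1) (G.v (a - 1) ((e0 (a - 1 + 1)).symm y)) := by
      funext y
      rw [hv (a - 1) ((e0 (a - 1 + 1)).symm y), LinearEquiv.apply_symm_apply]
    have hbij : Function.Bijective
        ((gaugeDirectSum fun i => stdFreeGaugeWitt p k (d i)).v (a - 1)) := by
      rw [hfun]
      exact (e0 (a - 1)).bijective.comp (hb.comp (e0 (a - 1 + 1)).symm.bijective)
    obtain ⟨y, hy⟩ := hbij.2 (Pi.single i 1 : Fin n → (WittVector p k))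
    rw [Sv_apply p k d (a - 1) y] at hy
    have h1 := congrFun hy i
    exact hpunit (IsUnit.of_mul_eq_one _
      ((if_neg (show ¬ (a - 1 + 1 ≤ d i) by omega)).symm.trans (h1.trans (Pi.single_eq_same i 1))))
  · intro i
    by_contra hbi
    push_neg at hbi
    have hb := hconc.2 b le_rfl
    have hfun : ⇑((gaugeDirectSum fun i => stdFreeGaugeWitt p k (d i)).f b)
        = fun y => e0 (b + 1) (G.f b ((e0 b).symm y)) := by
      funext y
      rw [hf b ((e0 b).symm y), LinearEquiv.apply_symm_apply]
    have hbij : Function.Bijective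
        ((gaugeDirectSum fun i => stdFreeGaugeWitt p k (d i)).f b) := by
      rw [hfun]
      exact (e0 (b + 1)).bijective.comp (hb.comp (e0 b).symm.bijective)
    obtain ⟨y, hy⟩ := hbij.2 (Pi.single i 1 : Fin n → (WittVector p k))
    rw [Sf_apply p k d b y] at hy
    have h1 := congrFun hy i
    exact hpunit (IsUnit.of_mul_eq_one _
      ((if_neg (show ¬ (d i ≤ b) by omega)).symm.trans (h1.trans (Pi.single_eq_same i 1))))

end MP

/-- A φ-gauge of finite type over `W(k)`, concentrated in `[a,b]`, comes from a virtual
crystal over `k` (i.e. is isomorphic as a φ-gauge to the gauge associated to a virtual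
crystal, with the φ-structure given by the divided Frobenius) if and only if its underlying
gauge is free. -/
theorem phiGauge_comes_from_crystal_iff_free (p : ℕ) [hp : Fact p.Prime] (k : Type)
    [Field k] [CharP k p] [PerfectRing k p]
    (σB : FractionRing (WittVector p k) ≃+* FractionRing (WittVector p k))
    (hσB : ∀ w : WittVector p k,
      σB (algebraMap (WittVector p k) (FractionRing (WittVector p k)) w) =
        algebraMap (WittVector p k) (FractionRing (WittVector p k))
          (WittVector.frobeniusEquiv p k w))
    (G : GaugeData (WittVector p k) p) (hft : G.IsFiniteType) (a b : ℤ) (hab : a ≤ b)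
    (hconc : G.ConcentratedIn a b)
    (φ : G.M b → G.M a) (hφadd : ∀ x y, φ (x + y) = φ x + φ y)
    (hφbij : Function.Bijective φ)
    (hφsemi : ∀ (c : WittVector p k) (x : G.M b),
      φ (c • x) = (WittVector.frobeniusEquiv p k c) • φ x) :
    G.IsFreeWitt ↔
      ∃ C : VirtualCrystal p k σB,
        ((p : FractionRing (WittVector p k)) ^ b • (C.L : Set C.D) ⊆
          C.phi '' (C.L : Set C.D)) ∧
        (C.phi '' (C.L : Set C.D) ⊆
          (p : FractionRing (WittVector p k)) ^ a • (C.L : Set C.D)) ∧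
        ∃ e : ∀ r : ℤ, G.M r ≃ₗ[WittVector p k] ↥(crystalComponent p k C.D C.phi C.L σB hσB C.phi_add C.phi_semi r),
          (∀ (r : ℤ) (x : G.M r),
            ((e (r + 1)) (G.f r x) : C.D) = (p : WittVector p k) • ((e r x : C.D))) ∧
          (∀ (r : ℤ) (x : G.M (r + 1)), ((e r (G.v r x)) : C.D) = ((e (r + 1) x : C.D))) ∧
          (∀ x : G.M b, C.phi ((e b x : C.D)) =
            (p : FractionRing (WittVector p k)) ^ b • ((e a (φ x) : C.D))) := by
  constructor
  · rintro ⟨n, d, e0, hf0, hv0⟩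
    obtain ⟨hda, hdb⟩ := conc_bounds p k G a b hconc d e0 hf0 hv0
    exact free_implies_crystal p k σB hσB G a b d hda hdb e0 hf0 hv0 φ hφadd hφbij hφsemi
  · rintro ⟨C, hsub1, hsub2, e, hef, hev, _⟩
    exact crystal_implies_free p k σB hσB G a b C hsub1 hsub2 e hef hev
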